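/- Let H be a complex Hilbert space and L ⊆ H a closed real-linear subspace; let L' := {g ∈ H : Im⟪f,g⟫ = 0 for all f ∈ L} be its symplectic complement, L∞ := L ∩ iL, and La := L ∩ L'. Then: (i) La is orthogonal to L∞ with respect to the full complex inner product, i.e. ⟪f,g⟫ = 0 for all f ∈ La, g ∈ L∞; (ii) La is orthogonal to iLa with respect to the real inner product Re⟪·,·⟫; consequently La + iLa is a closed real subspace of H equal to the orthogonal direct sum La ⊕ iLa. -/

import Mathlib

open scoped Pointwise
attribute [local instance] InnerProductSpace.complexToReal

/-- The symplectic complement of a set `L` in a complex Hilbert space: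
all `g` with `Im⟪f,g⟫ = 0` for every `f ∈ L`. -/
def sympComplementSet {H : Type*} [NormedAddCommGroup H] [InnerProductSpace ℂ H]
    (L : Set H) : Set H :=
  {g | ∀ f ∈ L, (inner ℂ f g : ℂ).im = 0}

set_option maxHeartbeats 1000000 in
/-- For a closed real-linear subspace `L` of a complex Hilbert space `H`, with symplectic
complement `L'`, nonseparating part `L∞ = L ∩ iL` and abelian part `La = L ∩ L'`:
(i) `La` is orthogonal to `L∞` for the full complex inner ℂ product; (ii) `La` is orthogonal to
`iLa` for the real inner ℂ product `Re⟪·,·⟫`; consequently `La + iLa` is a closed real subspace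
of `H` (equal to the orthogonal direct sum `La ⊕ iLa`). -/
theorem abelian_part_orthogonality
    {H : Type*} [NormedAddCommGroup H] [InnerProductSpace ℂ H] [CompleteSpace H]
    (L : Submodule ℝ H) (hL : IsClosed (L : Set H)) :
    (∀ f ∈ (L : Set H) ∩ sympComplementSet (L : Set H),
      ∀ g ∈ (L : Set H) ∩ (Complex.I • (L : Set H)), (inner ℂ f g : ℂ) = 0) ∧
    (∀ f ∈ (L : Set H) ∩ sympComplementSet (L : Set H),
      ∀ g ∈ (L : Set H) ∩ sympComplementSet (L : Set H),
        (inner ℂ f (Complex.I • g) : ℂ).re = 0) ∧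
    IsClosed {x : H | ∃ a ∈ (L : Set H) ∩ sympComplementSet (L : Set H),
      ∃ b ∈ (L : Set H) ∩ sympComplementSet (L : Set H), x = a + Complex.I • b} := by
  -- basic facts
  have him : ∀ f ∈ (L : Set H) ∩ sympComplementSet (L : Set H), ∀ g ∈ (L : Set H),
      (inner ℂ f g : ℂ).im = 0 := by
    intro f hf g hg
    have h1 : (inner ℂ g f : ℂ).im = 0 := hf.2 g hg
    have h2 : (inner ℂ f g : ℂ) = starRingEnd ℂ (inner ℂ g f) := (inner_conj_symm f g).symm
    rw [h2, Complex.conj_im, h1, neg_zero]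
  -- (i)
  have part1 : ∀ f ∈ (L : Set H) ∩ sympComplementSet (L : Set H),
      ∀ g ∈ (L : Set H) ∩ (Complex.I • (L : Set H)), (inner ℂ f g : ℂ) = 0 := by
    intro f hf g hg
    obtain ⟨h, hh, rfl⟩ := hg.2
    have him1 : (inner ℂ f (Complex.I • h) : ℂ).im = 0 := him f hf _ hg.1
    have him2 : (inner ℂ f h : ℂ).im = 0 := him f hf h hh
    have : (inner ℂ f (Complex.I • h) : ℂ) = Complex.I * inner ℂ f h := inner_smul_right f h Complex.I
    apply Complex.ext
    · have := congrArg Complex.re this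
      simp [Complex.mul_re, him2] at this
      simp [inner_smul_right, Complex.mul_re, him2]
    · exact him1
  -- (ii)
  have part2 : ∀ f ∈ (L : Set H) ∩ sympComplementSet (L : Set H),
      ∀ g ∈ (L : Set H) ∩ sympComplementSet (L : Set H),
        (inner ℂ f (Complex.I • g) : ℂ).re = 0 := by
    intro f hf g hg
    have h2 : (inner ℂ f g : ℂ).im = 0 := him f hf g hg.1
    rw [inner_smul_right]
    simp [Complex.mul_re, h2]
  refine ⟨part1, part2, ?_⟩
  -- the abelian part as a real submodule
  set Sa : Submodule ℝ H :=
    { carrier := (L : Set H) ∩ sympComplementSet (L : Set H)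
      add_mem' := by
        rintro a b ⟨haL, haS⟩ ⟨hbL, hbS⟩
        exact ⟨L.add_mem haL hbL, fun u hu => by
          rw [inner_add_right, Complex.add_im, haS u hu, hbS u hu, add_zero]⟩
      zero_mem' := ⟨L.zero_mem, fun u hu => by simp⟩
      smul_mem' := by
        rintro c x ⟨hxL, hxS⟩
        refine ⟨L.smul_mem c hxL, fun u hu => ?_⟩
        have : (inner ℂ u (c • x) : ℂ) = (c : ℂ) * inner ℂ u x := by
          rw [← Complex.coe_smul, inner_smul_right]
        rw [this]
        simp [Complex.mul_im, hxS u hu] } with hSa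
  have hSaCl : IsClosed (Sa : Set H) := by
    refine hL.inter ?_
    have : sympComplementSet (L : Set H) =
        ⋂ f ∈ (L : Set H), {g : H | (inner ℂ f g : ℂ).im = 0} := by
      ext g; simp [sympComplementSet]
    rw [this]
    refine isClosed_biInter fun f _ => ?_
    exact isClosed_eq ((Complex.continuous_im).comp (continuous_const.inner continuous_id))
      continuous_const
  haveI : CompleteSpace Sa := hSaCl.completeSpace_coe
  -- the continuous linear map (a, b) ↦ a + I • b
  set T : (Sa × Sa) →L[ℝ] H :=
    { toFun := fun p => (p.1 : H) + Complex.I • (p.2 : H)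
      map_add' := by
        rintro ⟨a, b⟩ ⟨c, d⟩
        simp [smul_add]
        abel
      map_smul' := by
        rintro r ⟨a, b⟩
        simp [smul_comm r Complex.I, smul_add]
      cont := by
        exact (continuous_subtype_val.comp continuous_fst).add
          ((continuous_subtype_val.comp continuous_snd).const_smul Complex.I) } with hT
  have hbound : ∀ p : Sa × Sa, ‖p‖ ≤ (1 : NNReal) * ‖T p‖ := by
    intro p
    rw [NNReal.coe_one, one_mul]
    have horth : (inner ℝ ((p.1 : H)) (Complex.I • (p.2 : H)) : ℝ) = 0 := by
      rw [real_inner_eq_re_inner ℂ]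
      exact part2 _ p.1.2 _ p.2.2
    have hpy : ‖T p‖ ^ 2 = ‖(p.1 : H)‖ ^ 2 + ‖(p.2 : H)‖ ^ 2 := by
      have : ‖(p.1 : H) + Complex.I • (p.2 : H)‖ ^ 2
          = ‖(p.1 : H)‖ ^ 2 + 2 * (inner ℝ ((p.1 : H)) (Complex.I • (p.2 : H)) : ℝ)
            + ‖Complex.I • (p.2 : H)‖ ^ 2 := norm_add_sq_real _ _
      rw [horth] at this
      have hnI : ‖Complex.I • (p.2 : H)‖ = ‖(p.2 : H)‖ := by
        rw [norm_smul, Complex.norm_I, one_mul]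
      simpa [hnI, hT] using this
    have hmax : ‖p‖ ^ 2 ≤ ‖T p‖ ^ 2 := by
      rw [hpy]
      have hpn : ‖p‖ = max ‖(p.1 : H)‖ ‖(p.2 : H)‖ := by
        rw [Prod.norm_def, Submodule.coe_norm, Submodule.coe_norm]
      rw [hpn]
      rcases le_total ‖(p.1 : H)‖ ‖(p.2 : H)‖ with h | h
      · rw [max_eq_right h]
        nlinarith [norm_nonneg (p.1 : H), norm_nonneg (p.2 : H)]
      · rw [max_eq_left h]
        nlinarith [norm_nonneg (p.1 : H), norm_nonneg (p.2 : H)]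
    have := Real.sqrt_le_sqrt hmax
    rwa [Real.sqrt_sq (norm_nonneg _), Real.sqrt_sq (norm_nonneg _)] at this
  have hal : AntilipschitzWith 1 T := T.antilipschitz_of_bound hbound
  have hclosed : IsClosed (Set.range T) := hal.isClosed_range T.uniformContinuous
  have hset : {x : H | ∃ a ∈ (L : Set H) ∩ sympComplementSet (L : Set H),
      ∃ b ∈ (L : Set H) ∩ sympComplementSet (L : Set H), x = a + Complex.I • b}
      = Set.range T := by
    ext x
    constructor
    · rintro ⟨a, ha, b, hb, rfl⟩
      exact ⟨(⟨a, ha⟩, ⟨b, hb⟩), rfl⟩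
    · rintro ⟨⟨a, b⟩, rfl⟩
      exact ⟨a, a.2, b, b.2, rfl⟩
  rw [hset]
  exact hclosed
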